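/- Let D1, ..., Dk be closed convex cones in R^n such that for every i, cos∠(−D_i, Σ_{j≠i} D_j) ≤ 1 − β for some β ∈ (0,1]. Then √(δ(D1 + ⋯ + Dk)) ≤ β^{−(k−1)/2} · Σ_{i=1}^k √(δ(D_i)). -/

import Mathlib

open scoped Pointwise
open MeasureTheory ProbabilityTheory Set
open scoped RealInnerProductSpace NNReal ENNReal

noncomputable def stdGaussian (n : ℕ) : Measure (EuclideanSpace ℝ (Fin n)) :=
  Measure.map (EuclideanSpace.equiv (Fin n) ℝ).symm
    (Measure.pi fun _ : Fin n => gaussianReal 0 1)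

/-- Statistical dimension via the sup formulation
`δ(K) = E[(sup{⟪g,y⟫ : y ∈ K ∩ Bⁿ})²]`. -/
noncomputable def statDim {n : ℕ} (K : Set (EuclideanSpace ℝ (Fin n))) : ℝ :=
  ∫ g, (sSup {r : ℝ | ∃ y, y ∈ K ∧ ‖y‖ ≤ 1 ∧ r = ⟪g, y⟫}) ^ 2 ∂(stdGaussian n)

/-- Gauge of an atomic set: `γ_A(x) = inf{λ ≥ 0 : x ∈ λ·conv(A ∪ {0})}`. -/
noncomputable def agauge {n : ℕ} (A : Set (EuclideanSpace ℝ (Fin n)))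
    (x : EuclideanSpace ℝ (Fin n)) : ℝ :=
  gauge (convexHull ℝ (insert 0 A)) x

/-- Descent cone `D(A,x) = cone{d : γ_A(x+d) ≤ γ_A(x)}`. -/
def descCone {n : ℕ} (A : Set (EuclideanSpace ℝ (Fin n))) (x : EuclideanSpace ℝ (Fin n)) :
    Set (EuclideanSpace ℝ (Fin n)) :=
  {d | ∃ c : ℝ, ∃ s, 0 ≤ c ∧ agauge A (x + s) ≤ agauge A x ∧ d = c • s}

variable {n : ℕ}

local notation "E" => EuclideanSpace ℝ (Fin n)

noncomputable def fsup (K : Set (EuclideanSpace ℝ (Fin n))) (g : EuclideanSpace ℝ (Fin n)) : ℝ :=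
  sSup {r : ℝ | ∃ y, y ∈ K ∧ ‖y‖ ≤ 1 ∧ r = ⟪g, y⟫}

lemma fsup_bdd (K : Set E) (g : E) : BddAbove {r : ℝ | ∃ y, y ∈ K ∧ ‖y‖ ≤ 1 ∧ r = ⟪g, y⟫} := by
  refine ⟨‖g‖, fun r hr => ?_⟩
  obtain ⟨y, _, hy1, rfl⟩ := hr
  calc ⟪g, y⟫ ≤ ‖g‖ * ‖y‖ := real_inner_le_norm g y
    _ ≤ ‖g‖ * 1 := by gcongr
    _ = ‖g‖ := mul_one _

lemma fsup_mem_zero {K : Set E} (h0 : (0:E) ∈ K) (g : E) :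
    (0:ℝ) ∈ {r : ℝ | ∃ y, y ∈ K ∧ ‖y‖ ≤ 1 ∧ r = ⟪g, y⟫} :=
  ⟨0, h0, by simp, by simp⟩

lemma fsup_nonneg {K : Set E} (h0 : (0:E) ∈ K) (g : E) : 0 ≤ fsup K g :=
  le_csSup (fsup_bdd K g) (fsup_mem_zero h0 g)

lemma fsup_le_norm {K : Set E} (h0 : (0:E) ∈ K) (g : E) : fsup K g ≤ ‖g‖ := by
  refine csSup_le ⟨0, fsup_mem_zero h0 g⟩ ?_
  rintro r ⟨y, _, hy1, rfl⟩
  calc ⟪g, y⟫ ≤ ‖g‖ * ‖y‖ := real_inner_le_norm g y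
    _ ≤ ‖g‖ * 1 := by gcongr
    _ = ‖g‖ := mul_one _

lemma inner_le_norm_mul_fsup {K : Set E}
    (hcone : ∀ c : ℝ, 0 ≤ c → ∀ x ∈ K, c • x ∈ K) {y : E} (hy : y ∈ K) (g : E) :
    ⟪g, y⟫ ≤ ‖y‖ * fsup K g := by
  rcases eq_or_ne y 0 with rfl | hy0
  · simp
  · have hu : (‖y‖⁻¹ • y) ∈ K := hcone _ (by positivity) y hy
    have hu1 : ‖(‖y‖⁻¹ • y)‖ = 1 := by
      rw [norm_smul]
      simp [abs_of_nonneg (inv_nonneg.mpr (norm_nonneg y)),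
        inv_mul_cancel₀ (norm_ne_zero_iff.mpr hy0)]
    have hle : ⟪g, ‖y‖⁻¹ • y⟫ ≤ fsup K g :=
      le_csSup (fsup_bdd K g) ⟨_, hu, hu1.le, rfl⟩
    have h2 : ⟪g, ‖y‖⁻¹ • y⟫ = ‖y‖⁻¹ * ⟪g, y⟫ := real_inner_smul_right g y _
    have hnpos : (0:ℝ) < ‖y‖ := norm_pos_iff.mpr hy0
    calc ⟪g, y⟫ = ‖y‖ * (‖y‖⁻¹ * ⟪g, y⟫) := by field_simp
      _ ≤ ‖y‖ * fsup K g := by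
          rw [← h2]; exact mul_le_mul_of_nonneg_left hle hnpos.le

lemma fsup_lipschitz {K : Set E} (h0 : (0:E) ∈ K) : LipschitzWith 1 (fsup K) := by
  refine LipschitzWith.of_le_add fun g g' => ?_
  refine csSup_le ⟨0, fsup_mem_zero h0 g⟩ ?_
  rintro r ⟨y, hy, hy1, rfl⟩
  have h1 : ⟪g', y⟫ ≤ fsup K g' := le_csSup (fsup_bdd K g') ⟨y, hy, hy1, rfl⟩
  have h2 : ⟪g - g', y⟫ ≤ ‖g - g'‖ := by
    calc ⟪g - g', y⟫ ≤ ‖g - g'‖ * ‖y‖ := real_inner_le_norm _ y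
      _ ≤ ‖g - g'‖ * 1 := by gcongr
      _ = ‖g - g'‖ := mul_one _
  have : ⟪g, y⟫ = ⟪g', y⟫ + ⟪g - g', y⟫ := by rw [inner_sub_left]; ring
  rw [this, dist_eq_norm]
  exact add_le_add h1 h2

lemma fsup_zero_set (g : E) : fsup (0 : Set E) g = 0 := by
  have : {r : ℝ | ∃ y, y ∈ (0 : Set E) ∧ ‖y‖ ≤ 1 ∧ r = ⟪g, y⟫} = {0} := by
    ext r
    simp only [Set.mem_setOf_eq, Set.mem_singleton_iff]
    constructor
    · rintro ⟨y, hy, _, rfl⟩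
      rw [Set.mem_zero] at hy
      simp [hy]
    · rintro rfl
      exact ⟨0, Set.mem_zero.mpr rfl, by simp, by simp⟩
  rw [fsup, this, csSup_singleton]

lemma fsup_empty (g : E) : fsup (∅ : Set E) g = 0 := by
  have : {r : ℝ | ∃ y, y ∈ (∅ : Set E) ∧ ‖y‖ ≤ 1 ∧ r = ⟪g, y⟫} = ∅ := by
    ext r; simp
  rw [fsup, this, Real.sSup_empty]

lemma fsup_add_le {K1 K2 : Set E} (h01 : (0:E) ∈ K1) (h02 : (0:E) ∈ K2)
    (hc1 : ∀ c : ℝ, 0 ≤ c → ∀ x ∈ K1, c • x ∈ K1)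
    (hc2 : ∀ c : ℝ, 0 ≤ c → ∀ x ∈ K2, c • x ∈ K2)
    {β : ℝ} (hβ0 : 0 < β) (hβ1 : β ≤ 1)
    (hang : ∀ y1 ∈ K1, ∀ y2 ∈ K2, -((1 - β) * (‖y1‖ * ‖y2‖)) ≤ ⟪y1, y2⟫) (g : E) :
    fsup (K1 + K2) g ≤ (Real.sqrt β)⁻¹ * (fsup K1 g + fsup K2 g) := by
  have h0s : (0:E) ∈ K1 + K2 := by
    have := Set.add_mem_add h01 h02
    simpa using this
  have hsβ : (0:ℝ) < Real.sqrt β := Real.sqrt_pos.mpr hβ0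
  refine csSup_le ⟨0, fsup_mem_zero h0s g⟩ ?_
  rintro r ⟨y, hy, hy1, rfl⟩
  rw [Set.mem_add] at hy
  obtain ⟨y1, hy1', y2, hy2', rfl⟩ := hy
  have ha : (0:ℝ) ≤ ‖y1‖ := norm_nonneg _
  have hb : (0:ℝ) ≤ ‖y2‖ := norm_nonneg _
  have hip : -((1 - β) * (‖y1‖ * ‖y2‖)) ≤ ⟪y1, y2⟫ := hang y1 hy1' y2 hy2'
  have hsq : ‖y1 + y2‖ ^ 2 ≤ 1 := pow_le_one₀ (norm_nonneg _) hy1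
  have hexp : ‖y1 + y2‖ ^ 2 = ‖y1‖ ^ 2 + 2 * ⟪y1, y2⟫ + ‖y2‖ ^ 2 := norm_add_sq_real y1 y2
  have key1 : β * ‖y1‖ ^ 2 ≤ 1 := by nlinarith [sq_nonneg (‖y1‖ - ‖y2‖), sq_nonneg (‖y1‖ + ‖y2‖)]
  have key2 : β * ‖y2‖ ^ 2 ≤ 1 := by nlinarith [sq_nonneg (‖y1‖ - ‖y2‖), sq_nonneg (‖y1‖ + ‖y2‖)]
  have hb1 : Real.sqrt β * ‖y1‖ ≤ 1 := by
    nlinarith [Real.sq_sqrt hβ0.le, sq_nonneg (Real.sqrt β * ‖y1‖ - 1), Real.sqrt_nonneg β]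
  have hb2 : Real.sqrt β * ‖y2‖ ≤ 1 := by
    nlinarith [Real.sq_sqrt hβ0.le, sq_nonneg (Real.sqrt β * ‖y2‖ - 1), Real.sqrt_nonneg β]
  have hn1 : ‖y1‖ ≤ (Real.sqrt β)⁻¹ := by
    rw [← one_div, le_div_iff₀ hsβ, mul_comm]; exact hb1
  have hn2 : ‖y2‖ ≤ (Real.sqrt β)⁻¹ := by
    rw [← one_div, le_div_iff₀ hsβ, mul_comm]; exact hb2
  have hf1 : 0 ≤ fsup K1 g := fsup_nonneg h01 g
  have hf2 : 0 ≤ fsup K2 g := fsup_nonneg h02 g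
  calc ⟪g, y1 + y2⟫ = ⟪g, y1⟫ + ⟪g, y2⟫ := inner_add_right g y1 y2
    _ ≤ ‖y1‖ * fsup K1 g + ‖y2‖ * fsup K2 g :=
        add_le_add (inner_le_norm_mul_fsup hc1 hy1' g) (inner_le_norm_mul_fsup hc2 hy2' g)
    _ ≤ (Real.sqrt β)⁻¹ * fsup K1 g + (Real.sqrt β)⁻¹ * fsup K2 g :=
        add_le_add (mul_le_mul_of_nonneg_right hn1 hf1) (mul_le_mul_of_nonneg_right hn2 hf2)
    _ = (Real.sqrt β)⁻¹ * (fsup K1 g + fsup K2 g) := by ring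

section SumCones

variable {k : ℕ} {D : Fin k → Set (EuclideanSpace ℝ (Fin n))}

lemma zero_mem_finsum (h0 : ∀ i, (0:E) ∈ D i) (s : Finset (Fin k)) :
    (0:E) ∈ ∑ j ∈ s, D j := by
  classical
  induction s using Finset.induction_on with
  | empty => simp [Set.mem_zero]
  | @insert _ _ ha ih =>
    rw [Finset.sum_insert ha]
    simpa using Set.add_mem_add (h0 _) ih

lemma cone_finsum (hcone : ∀ i, ∀ c : ℝ, 0 ≤ c → ∀ x ∈ D i, c • x ∈ D i)
    (s : Finset (Fin k)) : ∀ c : ℝ, 0 ≤ c → ∀ x ∈ ∑ j ∈ s, D j, c • x ∈ ∑ j ∈ s, D j := by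
  classical
  induction s using Finset.induction_on with
  | empty =>
    intro c hc x hx
    simp only [Finset.sum_empty, Set.mem_zero] at hx ⊢
    simp [hx]
  | @insert a t ha ih =>
    intro c hc x hx
    rw [Finset.sum_insert ha] at hx ⊢
    rw [Set.mem_add] at hx
    obtain ⟨u, hu, v, hv, rfl⟩ := hx
    rw [smul_add]
    exact Set.add_mem_add (hcone a c hc u hu) (ih c hc v hv)

lemma finsum_subset (h0 : ∀ i, (0:E) ∈ D i) {s t : Finset (Fin k)} (hst : s ⊆ t) :
    (∑ j ∈ s, D j) ⊆ ∑ j ∈ t, D j := by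
  classical
  intro x hx
  have hsum : ∑ j ∈ t \ s, D j + ∑ j ∈ s, D j = ∑ j ∈ t, D j := Finset.sum_sdiff hst
  rw [← hsum]
  have := Set.add_mem_add (zero_mem_finsum h0 (t \ s)) hx
  simpa using this

lemma fsup_finsum_le {β : ℝ} (hβ0 : 0 < β) (hβ1 : β ≤ 1)
    (h0 : ∀ i, (0:E) ∈ D i)
    (hcone : ∀ i, ∀ c : ℝ, 0 ≤ c → ∀ x ∈ D i, c • x ∈ D i)
    (hang : ∀ i, ∀ y1 ∈ D i, ∀ y2 ∈ ∑ j ∈ Finset.univ.erase i, D j,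
      -((1 - β) * (‖y1‖ * ‖y2‖)) ≤ ⟪y1, y2⟫)
    (g : E) (s : Finset (Fin k)) :
    fsup (∑ j ∈ s, D j) g ≤ (Real.sqrt β)⁻¹ ^ (s.card - 1) * ∑ j ∈ s, fsup (D j) g := by
  classical
  have hc1 : (1:ℝ) ≤ (Real.sqrt β)⁻¹ := by
    rw [le_inv_comm₀ one_pos (Real.sqrt_pos.mpr hβ0)]
    simpa using Real.sqrt_le_sqrt hβ1
  have hc0 : (0:ℝ) ≤ (Real.sqrt β)⁻¹ := le_trans zero_le_one hc1
  induction s using Finset.induction_on with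
  | empty => simp [fsup_zero_set]
  | @insert a t ha ih =>
    rcases t.eq_empty_or_nonempty with rfl | hne
    · simp [fsup_zero_set]
    · rw [Finset.sum_insert ha, Finset.sum_insert ha]
      have hangat : ∀ y1 ∈ D a, ∀ y2 ∈ ∑ j ∈ t, D j,
          -((1 - β) * (‖y1‖ * ‖y2‖)) ≤ ⟪y1, y2⟫ := by
        intro y1 hy1 y2 hy2
        refine hang a y1 hy1 y2 (finsum_subset h0 ?_ hy2)
        intro j hj
        exact Finset.mem_erase.mpr ⟨fun h => ha (h ▸ hj), Finset.mem_univ j⟩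
      have step1 := fsup_add_le (h0 a) (zero_mem_finsum h0 t) (hcone a)
        (cone_finsum hcone t) hβ0 hβ1 hangat g
      have hm : t.card - 1 + 1 = t.card := Nat.sub_add_cancel hne.card_pos
      have hcard : (insert a t).card - 1 = t.card := by
        rw [Finset.card_insert_of_notMem ha]; omega
      rw [hcard]
      set c := (Real.sqrt β)⁻¹ with hc
      have hfa : 0 ≤ fsup (D a) g := fsup_nonneg (h0 a) g
      have hS : 0 ≤ ∑ j ∈ t, fsup (D j) g :=
        Finset.sum_nonneg fun j _ => fsup_nonneg (h0 j) g
      calc fsup (D a + ∑ j ∈ t, D j) g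
          ≤ c * (fsup (D a) g + fsup (∑ j ∈ t, D j) g) := step1
        _ ≤ c * (fsup (D a) g + c ^ (t.card - 1) * ∑ j ∈ t, fsup (D j) g) := by
            have := ih
            gcongr
        _ = c * fsup (D a) g + c ^ (t.card - 1 + 1) * ∑ j ∈ t, fsup (D j) g := by
            rw [pow_succ]; ring
        _ ≤ c ^ t.card * fsup (D a) g + c ^ t.card * ∑ j ∈ t, fsup (D j) g := by
            rw [hm]
            gcongr
            exact le_self_pow₀ hc1 (by omega)
        _ = c ^ t.card * (fsup (D a) g + ∑ j ∈ t, fsup (D j) g) := by ring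
      
end SumCones


lemma integrable_sq_gaussianReal : Integrable (fun x : ℝ => x ^ 2) (gaussianReal 0 1) := by
  rw [gaussianReal_of_var_ne_zero 0 one_ne_zero,
    integrable_withDensity_iff (measurable_gaussianPDF 0 1)
      (ae_of_all _ fun x => ENNReal.ofReal_lt_top)]
  have h1 : Integrable (fun x : ℝ => x ^ (2:ℝ) * Real.exp (-(2⁻¹) * x ^ 2)) :=
    integrable_rpow_mul_exp_neg_mul_sq (by norm_num) (by norm_num)
  have h2 := h1.const_mul (Real.sqrt (2 * Real.pi * ((1:ℝ≥0):ℝ)))⁻¹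
  refine h2.congr (ae_of_all _ fun x => ?_)
  have hpdf : (gaussianPDF 0 1 x).toReal = gaussianPDFReal 0 1 x := by
    rw [gaussianPDF_def]; exact ENNReal.toReal_ofReal (gaussianPDFReal_nonneg 0 1 x)
  have hr : x ^ (2:ℝ) = x ^ 2 := by
    rw [show ((2:ℝ)) = ((2:ℕ):ℝ) by norm_num, Real.rpow_natCast]
  have he : -(2⁻¹:ℝ) * x ^ 2 = -(x - 0) ^ 2 / (2 * ((1:ℝ≥0):ℝ)) := by
    push_cast; ring
  simp only [hpdf, gaussianPDFReal]
  rw [hr, he]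
  ring

lemma map_eval_pi_gaussian (i : Fin n) :
    Measure.map (Function.eval i) (Measure.pi fun _ : Fin n => gaussianReal 0 1)
      = gaussianReal 0 1 := by
  ext s hs
  rw [Measure.map_apply (measurable_pi_apply i) hs]
  have hpre : Function.eval i ⁻¹' s
      = Set.pi Set.univ (Function.update (fun _ : Fin n => (Set.univ : Set ℝ)) i s) :=
    Set.eval_preimage
  rw [hpre, Measure.pi_pi]
  rw [Finset.prod_eq_single i
    (fun j _ hj => by rw [Function.update_of_ne hj]; simp)
    (fun h => absurd (Finset.mem_univ i) h)]
  rw [Function.update_self]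

lemma integrable_normsq_stdGaussian : Integrable (fun g : E => ‖g‖ ^ 2) (stdGaussian n) := by
  rw [_root_.stdGaussian]
  rw [integrable_map_measure
    ((by fun_prop : Continuous (fun g : E => ‖g‖ ^ 2)).aestronglyMeasurable)
    ((EuclideanSpace.equiv (Fin n) ℝ).symm.continuous.measurable.aemeasurable)]
  have heq : ((fun g : E => ‖g‖ ^ 2) ∘ (EuclideanSpace.equiv (Fin n) ℝ).symm)
      = fun x : Fin n → ℝ => ∑ i, (x i) ^ 2 := by
    funext x
    simp only [Function.comp_apply, EuclideanSpace.norm_eq]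
    rw [Real.sq_sqrt (Finset.sum_nonneg fun i _ => sq_nonneg _)]
    simp [Real.norm_eq_abs, sq_abs]
  rw [heq]
  refine integrable_finset_sum _ fun i _ => ?_
  have hmap : Measure.map (fun f : Fin n → ℝ => f i) (Measure.pi fun _ : Fin n => gaussianReal 0 1)
      = gaussianReal 0 1 := map_eval_pi_gaussian i
  have hg : AEStronglyMeasurable (fun t : ℝ => t ^ 2)
      (Measure.map (fun f : Fin n → ℝ => f i) (Measure.pi fun _ : Fin n => gaussianReal 0 1)) := by
    rw [hmap]; exact (continuous_pow 2).aestronglyMeasurable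
  have := (integrable_map_measure hg (measurable_pi_apply i).aemeasurable).mp
    (by rw [hmap]; exact integrable_sq_gaussianReal)
  exact this

lemma memℒp_fsup {K : Set E} (h0 : (0:E) ∈ K) : MemLp (fsup K) 2 (stdGaussian n) := by
  have hcont : Continuous (fsup K) := (fsup_lipschitz h0).continuous
  rw [memLp_two_iff_integrable_sq hcont.aestronglyMeasurable]
  refine integrable_normsq_stdGaussian.mono' (hcont.pow 2).aestronglyMeasurable
    (ae_of_all _ fun g => ?_)
  have h1 := fsup_nonneg h0 g
  have h2 := fsup_le_norm h0 g
  rw [Real.norm_eq_abs, abs_of_nonneg (by positivity)]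
  nlinarith [norm_nonneg g]

lemma integrable_fsup_mul {K1 K2 : Set E} (h01 : (0:E) ∈ K1) (h02 : (0:E) ∈ K2) :
    Integrable (fun g : E => fsup K1 g * fsup K2 g) (stdGaussian n) := by
  have hc1 : Continuous (fsup K1) := (fsup_lipschitz h01).continuous
  have hc2 : Continuous (fsup K2) := (fsup_lipschitz h02).continuous
  refine integrable_normsq_stdGaussian.mono' (hc1.mul hc2).aestronglyMeasurable
    (ae_of_all _ fun g => ?_)
  have h1 := fsup_nonneg h01 g; have h2 := fsup_nonneg h02 g
  have h3 := fsup_le_norm h01 g; have h4 := fsup_le_norm h02 g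
  rw [Real.norm_eq_abs, abs_of_nonneg (by positivity)]
  nlinarith [norm_nonneg g]

lemma integral_fsup_mul_le {K1 K2 : Set E} (h01 : (0:E) ∈ K1) (h02 : (0:E) ∈ K2) :
    ∫ g, fsup K1 g * fsup K2 g ∂(stdGaussian n) ≤
      Real.sqrt (∫ g, fsup K1 g ^ 2 ∂(stdGaussian n)) *
      Real.sqrt (∫ g, fsup K2 g ^ 2 ∂(stdGaussian n)) := by
  have hpq : Real.HolderConjugate 2 2 := Real.HolderConjugate.two_two
  have h2 : ENNReal.ofReal (2:ℝ) = 2 := by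
    rw [show ((2:ℝ)) = ((2:ℕ):ℝ) by norm_num, ENNReal.ofReal_natCast]; norm_num
  have hH := integral_mul_le_Lp_mul_Lq_of_nonneg hpq
    (ae_of_all _ (fsup_nonneg h01)) (ae_of_all _ (fsup_nonneg h02))
    (by rw [h2]; exact memℒp_fsup h01) (by rw [h2]; exact memℒp_fsup h02)
  have hconv : ∀ K : Set E, (∫ g, fsup K g ^ (2:ℝ) ∂(stdGaussian n)) ^ (1/(2:ℝ))
      = Real.sqrt (∫ g, fsup K g ^ 2 ∂(stdGaussian n)) := by
    intro K
    rw [Real.sqrt_eq_rpow]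
    congr 1
    refine integral_congr_ae (ae_of_all _ fun g => ?_)
    simp only [show ((2:ℝ)) = ((2:ℕ):ℝ) by norm_num, Real.rpow_natCast]
  rw [hconv K1, hconv K2] at hH
  exact hH

/-- If the cones `D i` are `β`-incoherent, then
`√δ(D₁ + ⋯ + D_k) ≤ β^{-(k-1)/2} Σᵢ √δ(Dᵢ)`. -/
theorem statDim_multi_sum_bound {n k : ℕ} (D : Fin k → Set (EuclideanSpace ℝ (Fin n)))
    (hDc : ∀ i, IsClosed (D i)) (hDconv : ∀ i, Convex ℝ (D i))
    (hDcone : ∀ i, ∀ c : ℝ, 0 ≤ c → ∀ x ∈ D i, c • x ∈ D i)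
    (β : ℝ) (hβ : β ∈ Set.Ioc (0 : ℝ) 1)
    (hangle : ∀ i, ∀ u v, u ∈ -(D i) → v ∈ ∑ j ∈ Finset.univ.erase i, D j →
      ‖u‖ = 1 → ‖v‖ = 1 → ⟪u, v⟫ ≤ 1 - β) :
    Real.sqrt (statDim (∑ i, D i)) ≤
      β ^ (-(((k : ℝ) - 1) / 2)) * ∑ i, Real.sqrt (statDim (D i)) := by
  classical
  obtain ⟨hβ0, hβ1⟩ := hβ
  have hstat : ∀ K : Set (EuclideanSpace ℝ (Fin n)),
      statDim K = ∫ g, fsup K g ^ 2 ∂(stdGaussian n) := fun _ => rfl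
  have hRHSfac : (0:ℝ) ≤ β ^ (-(((k:ℝ) - 1) / 2)) := Real.rpow_nonneg hβ0.le _
  have hsqrtsum : 0 ≤ ∑ i, Real.sqrt (statDim (D i)) :=
    Finset.sum_nonneg fun i _ => Real.sqrt_nonneg _
  by_cases hk : k = 0
  · subst hk
    have hz : statDim (∑ i : Fin 0, D i) = 0 := by
      rw [hstat]
      have h1 : ∀ g : EuclideanSpace ℝ (Fin n), fsup (∑ i : Fin 0, D i) g = 0 := by
        intro g
        rw [show (∑ i : Fin 0, D i) = (0 : Set (EuclideanSpace ℝ (Fin n))) by simp]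
        exact fsup_zero_set g
      simp [fsup_zero_set]
    rw [hz, Real.sqrt_zero]
    exact mul_nonneg hRHSfac hsqrtsum
  by_cases hne : ∀ i, (D i).Nonempty
  swap
  · push_neg at hne
    obtain ⟨i, hi⟩ := hne
    have hsum : (∑ j : Fin k, D j) = (∅ : Set (EuclideanSpace ℝ (Fin n))) := by
      rw [← Finset.add_sum_erase _ _ (Finset.mem_univ i), hi, Set.empty_add]
    have hz : statDim (∑ i, D i) = 0 := by
      rw [hstat]
      have h1 : ∀ g : EuclideanSpace ℝ (Fin n), fsup (∑ i, D i) g = 0 := by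
        intro g; rw [hsum]; exact fsup_empty g
      simp [h1]
    rw [hz, Real.sqrt_zero]
    exact mul_nonneg hRHSfac hsqrtsum
  · have h0 : ∀ i, (0 : EuclideanSpace ℝ (Fin n)) ∈ D i := fun i => by
      obtain ⟨x, hx⟩ := hne i
      have := hDcone i 0 le_rfl x hx
      rwa [zero_smul] at this
    set c : ℝ := (Real.sqrt β)⁻¹ with hcdef
    set C : ℝ := c ^ (k - 1) with hCdef
    have hc0 : (0:ℝ) ≤ c := inv_nonneg.mpr (Real.sqrt_nonneg β)
    have hC0 : (0:ℝ) ≤ C := pow_nonneg hc0 _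
    have hang' : ∀ i, ∀ y1 ∈ D i, ∀ y2 ∈ ∑ j ∈ Finset.univ.erase i, D j,
        -((1 - β) * (‖y1‖ * ‖y2‖)) ≤ ⟪y1, y2⟫ := by
      intro i y1 hy1 y2 hy2
      rcases eq_or_ne y1 0 with rfl | h1
      · simp
      rcases eq_or_ne y2 0 with rfl | h2
      · simp
      have ha : (0:ℝ) < ‖y1‖ := norm_pos_iff.mpr h1
      have hb : (0:ℝ) < ‖y2‖ := norm_pos_iff.mpr h2
      have hu : -(‖y1‖⁻¹ • y1) ∈ -(D i) := by
        rw [Set.mem_neg, neg_neg]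
        exact hDcone i _ (by positivity) y1 hy1
      have hv : (‖y2‖⁻¹ • y2) ∈ ∑ j ∈ Finset.univ.erase i, D j :=
        cone_finsum hDcone _ _ (by positivity) y2 hy2
      have hun : ‖-(‖y1‖⁻¹ • y1)‖ = 1 := by
        rw [norm_neg, norm_smul]
        simp [abs_of_nonneg (inv_nonneg.mpr (norm_nonneg y1)), inv_mul_cancel₀ (ne_of_gt ha)]
      have hvn : ‖(‖y2‖⁻¹ • y2)‖ = 1 := by
        rw [norm_smul]
        simp [abs_of_nonneg (inv_nonneg.mpr (norm_nonneg y2)), inv_mul_cancel₀ (ne_of_gt hb)]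
      have hIn := hangle i _ _ hu hv hun hvn
      have hinner : ⟪-(‖y1‖⁻¹ • y1), ‖y2‖⁻¹ • y2⟫ = -(‖y1‖⁻¹ * (‖y2‖⁻¹ * ⟪y1, y2⟫)) := by
        rw [inner_neg_left, real_inner_smul_left, real_inner_smul_right]
      rw [hinner] at hIn
      have h3 : -(1 - β) ≤ ‖y1‖⁻¹ * (‖y2‖⁻¹ * ⟪y1, y2⟫) := neg_le.mp hIn
      have h4 := mul_le_mul_of_nonneg_right h3 (mul_pos ha hb).le
      have h5 : (‖y1‖⁻¹ * (‖y2‖⁻¹ * ⟪y1, y2⟫)) * (‖y1‖ * ‖y2‖) = ⟪y1, y2⟫ := by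
        field_simp
      rw [h5] at h4
      linarith [h4]
    have hpt : ∀ g, fsup (∑ i, D i) g ≤ C * ∑ i, fsup (D i) g := by
      intro g
      have := fsup_finsum_le hβ0 hβ1 h0 hDcone hang' g Finset.univ
      rwa [Finset.card_univ, Fintype.card_fin] at this
    set f : Fin k → EuclideanSpace ℝ (Fin n) → ℝ := fun i => fsup (D i) with hfdef
    set Sf : EuclideanSpace ℝ (Fin n) → ℝ := fun g => ∑ i, f i g with hSfdef
    have hScont : Continuous Sf :=
      continuous_finset_sum _ fun i _ => (fsup_lipschitz (h0 i)).continuous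
    have hSnn : ∀ g, 0 ≤ Sf g := fun g =>
      Finset.sum_nonneg fun i _ => fsup_nonneg (h0 i) g
    have hSle : ∀ g, Sf g ≤ (k:ℝ) * ‖g‖ := fun g => by
      calc Sf g ≤ ∑ _i : Fin k, ‖g‖ :=
            Finset.sum_le_sum fun i _ => fsup_le_norm (h0 i) g
        _ = (k:ℝ) * ‖g‖ := by
            rw [Finset.sum_const, Finset.card_univ, Fintype.card_fin, nsmul_eq_mul]
    have hGint : Integrable (fun g => (C * Sf g) ^ 2) (stdGaussian n) := by
      refine (integrable_normsq_stdGaussian.const_mul (C^2 * (k:ℝ)^2)).mono'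
        ((continuous_const.mul hScont).pow 2).aestronglyMeasurable (ae_of_all _ fun g => ?_)
      rw [Real.norm_eq_abs, abs_of_nonneg (by positivity)]
      calc (C * Sf g)^2 = C^2 * (Sf g)^2 := by ring
        _ ≤ C^2 * ((k:ℝ) * ‖g‖)^2 := by
            have h1 := hSnn g
            have h2 := hSle g
            gcongr
        _ = C^2 * (k:ℝ)^2 * ‖g‖^2 := by ring
    have hzero_sum : (0 : EuclideanSpace ℝ (Fin n)) ∈ ∑ i, D i := zero_mem_finsum h0 _
    have step1 : statDim (∑ i, D i) ≤ ∫ g, (C * Sf g)^2 ∂(stdGaussian n) := by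
      rw [hstat]
      refine integral_mono_of_nonneg (ae_of_all _ fun g => sq_nonneg _) hGint
        (ae_of_all _ fun g => ?_)
      have h1 := fsup_nonneg hzero_sum g
      have h2 := hpt g
      have h2' : fsup (∑ i, D i) g ≤ C * Sf g := h2
      have h3 : (0:ℝ) ≤ C * Sf g := le_trans h1 h2'
      show fsup (∑ i, D i) g ^ 2 ≤ (C * Sf g)^2
      nlinarith [h1, h2', h3]
    have hmul : ∀ i j : Fin k, Integrable (fun g => f i g * f j g) (stdGaussian n) :=
      fun i j => integrable_fsup_mul (h0 i) (h0 j)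
    have step3 : ∫ g, Sf g ^ 2 ∂(stdGaussian n)
        = ∑ i, ∑ j, ∫ g, f i g * f j g ∂(stdGaussian n) := by
      have h1 : ∀ g, Sf g ^ 2 = ∑ i, ∑ j, f i g * f j g := fun g => by
        rw [sq, Finset.sum_mul_sum]
      calc ∫ g, Sf g ^2 ∂(stdGaussian n)
          = ∫ g, ∑ i, ∑ j, f i g * f j g ∂(stdGaussian n) :=
            integral_congr_ae (ae_of_all _ h1)
        _ = ∑ i, ∫ g, ∑ j, f i g * f j g ∂(stdGaussian n) :=
            integral_finset_sum _ fun i _ => integrable_finset_sum _ fun j _ => hmul i j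
        _ = ∑ i, ∑ j, ∫ g, f i g * f j g ∂(stdGaussian n) :=
            Finset.sum_congr rfl fun i _ => integral_finset_sum _ fun j _ => hmul i j
    set a : Fin k → ℝ := fun i => Real.sqrt (statDim (D i)) with hadef
    have step4 : ∫ g, Sf g ^2 ∂(stdGaussian n) ≤ (∑ i, a i)^2 := by
      rw [step3, sq, Finset.sum_mul_sum]
      refine Finset.sum_le_sum fun i _ => Finset.sum_le_sum fun j _ => ?_
      exact integral_fsup_mul_le (h0 i) (h0 j)
    have hasum : (0:ℝ) ≤ ∑ i, a i := Finset.sum_nonneg fun i _ => Real.sqrt_nonneg _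
    have hCeq : β ^ (-(((k:ℝ) - 1) / 2)) = C := by
      have hk1 : (1:ℕ) ≤ k := Nat.one_le_iff_ne_zero.mpr hk
      have h1 : ((k:ℝ) - 1) = ((k - 1 : ℕ) : ℝ) := by
        rw [Nat.cast_sub hk1]; norm_num
      have h2 : -((((k - 1 : ℕ)):ℝ) / 2) = (-(1/2):ℝ) * ((k - 1 : ℕ):ℝ) := by ring
      rw [h1, h2, Real.rpow_mul hβ0.le, Real.rpow_natCast]
      congr 1
      rw [Real.rpow_neg hβ0.le, ← Real.sqrt_eq_rpow]
    calc Real.sqrt (statDim (∑ i, D i)) ≤ Real.sqrt ((C * ∑ i, a i)^2) := by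
          apply Real.sqrt_le_sqrt
          calc statDim (∑ i, D i) ≤ ∫ g, (C * Sf g)^2 ∂(stdGaussian n) := step1
            _ = C^2 * ∫ g, Sf g ^2 ∂(stdGaussian n) := by
                simp_rw [mul_pow]
                rw [integral_const_mul]
            _ ≤ C^2 * (∑ i, a i)^2 := mul_le_mul_of_nonneg_left step4 (sq_nonneg C)
            _ = (C * ∑ i, a i)^2 := by ring
      _ = C * ∑ i, a i := Real.sqrt_sq (mul_nonneg hC0 hasum)
      _ = β ^ (-(((k:ℝ) - 1) / 2)) * ∑ i, Real.sqrt (statDim (D i)) := by rw [hCeq]
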